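/- In SL(2, ℤ[1/p]), the element γ = [[1,1],[0,1]] is conjugate to γ^{pⁿ} for every n ≥ 0. Consequently SL(2, ℤ[1/p]) does not have the bounded depth roots property. -/

import Mathlib

/-- A group has the bounded depth roots property if every infinite-order element
has only roots of bounded order: for every infinite-order `γ` there is `p` such
that `η ^ q ≠ γ` whenever `q ≥ p`. -/
def BoundedDepthRoots (G : Type*) [Group G] : Prop :=
  ∀ γ : G, ¬IsOfFinOrder γ → ∃ p : ℕ, ∀ q : ℕ, p ≤ q → ∀ η : G, η ^ q ≠ γ

private lemma unipotent_pow {R : Type*} [CommRing R] (k : ℕ) :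
    (!![1, 1; 0, 1] : Matrix (Fin 2) (Fin 2) R) ^ k = !![1, (k : R); 0, 1] := by
  induction k with
  | zero => simp [Matrix.one_fin_two]
  | succ n ih =>
      rw [pow_succ, ih, Matrix.mul_fin_two]
      push_cast
      congr 1 <;> ring

/-- In `SL(2, ℤ[1/p])`, the unipotent `γ = [[1,1],[0,1]]` is conjugate to
`γ ^ (p ^ (2n))` for every `n ≥ 0` (conjugation by `diag(pⁿ, p⁻ⁿ)`).
Consequently `SL(2, ℤ[1/p])` does not have the bounded depth roots property. -/
theorem SL2_Zinv_p_conjugate_powers_and_no_bounded_depth_roots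
    (p : ℕ) (hp : p.Prime)
    (γ : Matrix.SpecialLinearGroup (Fin 2) (Localization.Away (p : ℤ)))
    (hγ : (γ : Matrix (Fin 2) (Fin 2) (Localization.Away (p : ℤ)))
      = !![1, 1; 0, 1]) :
    (∀ n : ℕ, IsConj γ (γ ^ p ^ (2 * n))) ∧
      ¬BoundedDepthRoots
        (Matrix.SpecialLinearGroup (Fin 2) (Localization.Away (p : ℤ))) := by
  set R := Localization.Away (p : ℤ) with hR
  -- char zero
  have hinj : Function.Injective (algebraMap ℤ R) :=
    IsLocalization.injective R
      (powers_le_nonZeroDivisors_of_noZeroDivisors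
        (by exact_mod_cast hp.ne_zero : (p : ℤ) ≠ 0))
  have hchar : CharZero R := charZero_of_injective_algebraMap hinj
  -- the scalar p and its inverse
  set t : R := ((p : ℤ) : R) with ht
  set u : R := IsLocalization.Away.invSelf (S := R) (p : ℤ) with hu
  have htu : t * u = 1 := by
    have := IsLocalization.Away.mul_invSelf (S := R) (x := (p : ℤ))
    simpa [ht, hu] using this
  have htc : t = ((p : ℕ) : R) := by push_cast [ht]; ring
  -- coercion of powers of γ
  have hpow : ∀ k : ℕ, ((γ ^ k : Matrix.SpecialLinearGroup (Fin 2) R) :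
      Matrix (Fin 2) (Fin 2) R) = !![1, (k : R); 0, 1] := by
    intro k
    rw [Matrix.SpecialLinearGroup.coe_pow, hγ, unipotent_pow]
  -- infinite order
  have hfin : ¬IsOfFinOrder γ := by
    intro hfo
    obtain ⟨k, hk, hγk⟩ := isOfFinOrder_iff_pow_eq_one.mp hfo
    have : ((γ ^ k : Matrix.SpecialLinearGroup (Fin 2) R) :
        Matrix (Fin 2) (Fin 2) R) 0 1 = (1 : Matrix.SpecialLinearGroup (Fin 2) R) 0 1 := by
      rw [hγk]
    rw [hpow k] at this
    simp [Matrix.SpecialLinearGroup.coe_one] at this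
    exact hk.ne' (Nat.cast_injective (by simpa using this : ((k : ℕ) : R) = ((0:ℕ) : R)))
  -- conjugation
  have hconj : ∀ n : ℕ, IsConj γ (γ ^ p ^ (2 * n)) := by
    intro n
    have hdet : Matrix.det (!![t ^ n, 0; 0, u ^ n] : Matrix (Fin 2) (Fin 2) R) = 1 := by
      rw [Matrix.det_fin_two_of]
      calc t ^ n * u ^ n - 0 * 0 = (t * u) ^ n := by ring
        _ = 1 := by rw [htu, one_pow]
    set c : Matrix.SpecialLinearGroup (Fin 2) R := ⟨!![t ^ n, 0; 0, u ^ n], hdet⟩ with hc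
    rw [isConj_iff]
    refine ⟨c, ?_⟩
    have hsemi : c * γ = γ ^ p ^ (2 * n) * c := by
      apply Subtype.ext
      show (c : Matrix (Fin 2) (Fin 2) R) * (γ : Matrix (Fin 2) (Fin 2) R) =
        ((γ ^ p ^ (2 * n) : Matrix.SpecialLinearGroup (Fin 2) R) : Matrix (Fin 2) (Fin 2) R) * c
      push_cast [Matrix.SpecialLinearGroup.coe_mul, hγ, hpow, hc]
      rw [Matrix.mul_fin_two, Matrix.mul_fin_two]
      have h1 : ((p : ℕ) : R) ^ (2 * n) * u ^ n = t ^ n := by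
        rw [← htc]
        calc t ^ (2 * n) * u ^ n = t ^ n * (t * u) ^ n := by ring
          _ = t ^ n := by rw [htu]; ring
      simp only [mul_one, one_mul, mul_zero, zero_mul, add_zero, zero_add]
      rw [h1]
    rw [mul_inv_eq_iff_eq_mul]
    exact hsemi
  refine ⟨hconj, ?_⟩
  intro hB
  obtain ⟨P, hP⟩ := hB γ hfin
  -- choose n with P ≤ p ^ (2 * P)
  have hq : P ≤ p ^ (2 * P) := by
    calc P ≤ 2 ^ P := Nat.le_of_lt (Nat.lt_two_pow_self (n := P))
      _ ≤ p ^ P := Nat.pow_le_pow_left hp.two_le P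
      _ ≤ p ^ (2 * P) := Nat.pow_le_pow_right hp.pos (by omega)
  obtain ⟨c, hcγ⟩ := isConj_iff.mp (hconj P)
  refine hP (p ^ (2 * P)) hq (c⁻¹ * γ * c) ?_
  have : (c⁻¹ * γ * c) ^ p ^ (2 * P) = c⁻¹ * γ ^ p ^ (2 * P) * c := by
    simpa [inv_inv] using conj_pow (i := p ^ (2 * P)) (a := c⁻¹) (b := γ)
  rw [this, ← hcγ]
  group
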